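/- Let α>0, p∈(0,1), let r be the nonnegative integer with 0 < α−r ≤ 1, let n≥1 be an integer, and let ε∈(0,1) satisfy ε(1 + n/(α−r)) < 1. Then for every set partition 𝒜 of {1,…,n} (with number of blocks t ≤ n), Pr_{ε,n}(𝒜) ≤ (1 + α(1−p)ε)^n · (1 + ((1−p)/p) ε² (1 + n/(α−r))^{3+r})^n · (1 + ((1−p)/p) ε (1 + n/(α−r))^{2+r}) · Pr_{0,n}(𝒜). -/

import Mathlib

open MeasureTheory

/-- The Beta function `B(a,b) = ∫_0^1 x^(a-1) (1-x)^(b-1) dx`. -/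
noncomputable def betaFun (a b : ℝ) : ℝ :=
  ∫ x in (0:ℝ)..1, x ^ (a - 1) * (1 - x) ^ (b - 1)

/-- The regularized incomplete Beta function
`I_ε(a,b) = (1/B(a,b)) ∫_0^ε x^(a-1) (1-x)^(b-1) dx`. -/
noncomputable def incBeta (ε a b : ℝ) : ℝ :=
  (∫ x in (0:ℝ)..ε, x ^ (a - 1) * (1 - x) ^ (b - 1)) / betaFun a b

/-- `P` is a set partition of `{1,…,n}` (modelled as `Fin n`): the blocks are non-empty and
every point lies in exactly one block. -/
def IsSetPartition (n : ℕ) (P : Finset (Finset (Fin n))) : Prop :=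
  (∅ ∉ P) ∧ ∀ i : Fin n, ∃! A : Finset (Fin n), A ∈ P ∧ i ∈ A

/-- The type of set partitions of `{1,…,n}`. -/
def SetPartition (n : ℕ) := {P : Finset (Finset (Fin n)) // IsSetPartition n P}

noncomputable instance (n : ℕ) : Fintype (SetPartition n) := by
  unfold SetPartition; exact Fintype.ofFinite _

/-- An enumeration of the blocks of a finite family of blocks by `Fin t`, `t` the number of
blocks. -/
noncomputable def blockEnum {n : ℕ} (P : Finset (Finset (Fin n))) :
    Fin P.card → Finset (Fin n) :=
  fun j => ((Fintype.equivFinOfCardEq (Fintype.card_coe P)).symm j : Finset (Fin n))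

/-- The sizes `n_1, …, n_t` of the blocks of a set partition `P` with `t = P.1.card` blocks. -/
noncomputable def blockSize {n : ℕ} (P : SetPartition n) : Fin P.1.card → ℕ :=
  fun j => (blockEnum P.1 j).card

/-- The exchangeable partition probability function of the quasi-Bernoulli stick-breaking
process with parameters `α`, `p`, `ε ∈ (0,1)`, evaluated on a partition of `n` points into `t`
blocks of sizes `ns 1, …, ns t`:
`(α^t Γ(α)/Γ(n+α)) (∏_j n_j!) Σ_{σ∈S_t} ∏_j [p+(1-p) I_ε(g_{j+1}(σ)+α, n_{σ_j}+1)/ε^α]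
  / [g_j(σ)+α(1-p)(1-ε^{g_j(σ)})]` where `g_j(σ) = Σ_{l=j}^t n_{σ_l}`. -/
noncomputable def eppfEps (α p ε : ℝ) (n t : ℕ) (ns : Fin t → ℕ) : ℝ :=
  α ^ t * Real.Gamma α / Real.Gamma ((n : ℝ) + α) *
    (∏ j, (Nat.factorial (ns j) : ℝ)) *
    ∑ σ : Equiv.Perm (Fin t), ∏ j,
      (p + (1 - p) *
          incBeta ε (((∑ l ∈ Finset.Ioi j, ns (σ l) : ℕ) : ℝ) + α) ((ns (σ j) : ℝ) + 1)
          / ε ^ α) /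
      (((∑ l ∈ Finset.Ici j, ns (σ l) : ℕ) : ℝ) +
        α * (1 - p) * (1 - ε ^ (∑ l ∈ Finset.Ici j, ns (σ l))))

/-- The exchangeable partition probability function of the quasi-Bernoulli stick-breaking
process with `ε = 0` (a finite stick-breaking model with `Geometric(1-p)` number of
components and `Beta(1,α)` proportions):
`(α^t Γ(α)/Γ(n+α)) (∏_j n_j!) Σ_{σ∈S_t} ∏_j [p + 𝟙(j=t)(1-p)/(α B(α, n_{σ_t}+1))]
  / [g_j(σ)+α(1-p)]` where `g_j(σ) = Σ_{l=j}^t n_{σ_l}`. -/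
noncomputable def eppfZero (α p : ℝ) (n t : ℕ) (ns : Fin t → ℕ) : ℝ :=
  α ^ t * Real.Gamma α / Real.Gamma ((n : ℝ) + α) *
    (∏ j, (Nat.factorial (ns j) : ℝ)) *
    ∑ σ : Equiv.Perm (Fin t), ∏ j : Fin t,
      (p + (if j.val = t - 1 then
              (1 - p) / (α * betaFun α ((ns (σ j) : ℝ) + 1)) else 0)) /
      (((∑ l ∈ Finset.Ici j, ns (σ l) : ℕ) : ℝ) + α * (1 - p))

/-- `Pr_{ε,n}(𝒜)` for a set partition `𝒜` of `{1,…,n}` and `ε ∈ (0,1)`. -/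
noncomputable def PrEps (α p ε : ℝ) (n : ℕ) (P : SetPartition n) : ℝ :=
  eppfEps α p ε n P.1.card (blockSize P)

/-- `Pr_{0,n}(𝒜)` for a set partition `𝒜` of `{1,…,n}`. -/
noncomputable def PrZero (α p : ℝ) (n : ℕ) (P : SetPartition n) : ℝ :=
  eppfZero α p n P.1.card (blockSize P)



open intervalIntegral

lemma integrand_integrable {c m ε : ℝ} (hc : 0 < c) (hm : 0 ≤ m)
    (hε0 : 0 ≤ ε) (hε1 : ε ≤ 1) :
    IntervalIntegrable (fun x : ℝ => x ^ (c - 1) * (1 - x) ^ m) volume 0 ε := by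
  have h1 : IntervalIntegrable (fun x : ℝ => x ^ (c - 1)) volume 0 ε :=
    intervalIntegrable_rpow' (by linarith)
  refine h1.mono_fun ?_ ?_
  · apply ContinuousOn.aestronglyMeasurable _ measurableSet_uIoc
    rw [Set.uIoc_of_le hε0]
    apply ContinuousOn.mul
    · exact ContinuousOn.rpow_const continuousOn_id fun x hx => Or.inl hx.1.ne'
    · exact ContinuousOn.rpow_const (continuousOn_const.sub continuousOn_id)
        fun x hx => Or.inr hm
  · filter_upwards [ae_restrict_mem measurableSet_uIoc] with x hx
    rw [Set.uIoc_of_le hε0] at hx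
    obtain ⟨hx0, hx1⟩ := hx
    have h1x : (0:ℝ) ≤ 1 - x := by linarith
    simp only [Real.norm_eq_abs]
    rw [abs_of_nonneg (by positivity), abs_of_nonneg (Real.rpow_nonneg hx0.le _)]
    have h2 : (1 - x) ^ m ≤ 1 := Real.rpow_le_one h1x (by linarith) hm
    nlinarith [Real.rpow_nonneg hx0.le (c-1), Real.rpow_nonneg h1x m]

lemma integral_nonneg'' {c m ε : ℝ} (hm : 0 ≤ m) (hε0 : 0 ≤ ε) (hε1 : ε ≤ 1) :
    0 ≤ ∫ x in (0:ℝ)..ε, x ^ (c - 1) * (1 - x) ^ m := by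
  apply intervalIntegral.integral_nonneg hε0
  intro x hx
  have h1x : (0:ℝ) ≤ 1 - x := by linarith [hx.2]
  have hx0 : (0:ℝ) ≤ x := hx.1
  positivity

lemma integral_le_rpow {c m ε : ℝ} (hc : 0 < c) (hm : 0 ≤ m)
    (hε0 : 0 < ε) (hε1 : ε ≤ 1) :
    (∫ x in (0:ℝ)..ε, x ^ (c - 1) * (1 - x) ^ m) ≤ ε ^ c / c := by
  have h1 : IntervalIntegrable (fun x : ℝ => x ^ (c - 1)) volume 0 ε :=
    intervalIntegrable_rpow' (by linarith)
  have key : (∫ x in (0:ℝ)..ε, x ^ (c - 1) * (1 - x) ^ m) ≤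
      ∫ x in (0:ℝ)..ε, x ^ (c - 1) := by
    apply intervalIntegral.integral_mono_on hε0.le
      (integrand_integrable hc hm hε0.le hε1) h1
    intro x hx
    obtain ⟨hx0, hx1⟩ := hx
    have h1x : (0:ℝ) ≤ 1 - x := by linarith
    have h2 : (1 - x) ^ m ≤ 1 := Real.rpow_le_one h1x (by linarith) hm
    nlinarith [Real.rpow_nonneg hx0 (c-1)]
  have h2 : (∫ x in (0:ℝ)..ε, x ^ (c - 1)) = ε ^ c / c := by
    rw [integral_rpow (Or.inl (by linarith))]
    rw [sub_add_cancel, Real.zero_rpow hc.ne', sub_zero]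
  linarith

lemma betaFun_eq_complex (a b : ℝ) :
    ((betaFun a b : ℝ) : ℂ) = Complex.betaIntegral a b := by
  rw [Complex.betaIntegral, betaFun, ← intervalIntegral.integral_ofReal]
  refine intervalIntegral.integral_congr fun x hx => ?_
  rw [Set.uIcc_of_le (by norm_num : (0:ℝ) ≤ 1)] at hx
  obtain ⟨hx0, hx1⟩ := hx
  rw [Complex.ofReal_mul, Complex.ofReal_cpow hx0, Complex.ofReal_cpow (by linarith : (0:ℝ) ≤ 1 - x)]
  push_cast
  ring

lemma betaFun_nat (a : ℝ) (ha : 0 < a) (m : ℕ) :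
    betaFun a ((m : ℝ) + 1) =
      (Nat.factorial m : ℝ) / ∏ j ∈ Finset.range (m + 1), (a + j) := by
  have h := Complex.betaIntegral_eval_nat_add_one_right (u := (a : ℂ)) (by simpa using ha) m
  have h2 := betaFun_eq_complex a ((m : ℝ) + 1)
  rw [show (((m : ℝ) + 1 : ℝ) : ℂ) = (m : ℂ) + 1 by push_cast; ring] at h2
  rw [h] at h2
  have h3 : ((betaFun a ((m : ℝ) + 1) : ℝ) : ℂ) =
      (((Nat.factorial m : ℝ) / ∏ j ∈ Finset.range (m + 1), (a + j) : ℝ) : ℂ) := by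
    rw [h2]; push_cast; ring
  exact_mod_cast h3

lemma prod_fact_le {c : ℝ} (hc : 0 ≤ c) {k : ℕ} (hck : c ≤ k) (m : ℕ) :
    (∏ j ∈ Finset.range m, (c + 1 + j)) ≤ ((m : ℝ) + 1) ^ k * m.factorial := by
  induction m with
  | zero => simp
  | succ m ih =>
    rw [Finset.prod_range_succ]
    have hfac : (0:ℝ) < m.factorial := by positivity
    have hm1 : (0:ℝ) < (m:ℝ) + 1 := by positivity
    have hbern : 1 + (k:ℝ) * (1 / ((m:ℝ) + 1)) ≤ (1 + 1 / ((m:ℝ) + 1)) ^ k :=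
      one_add_mul_le_pow (le_trans (by norm_num : (-2:ℝ) ≤ 0) (by positivity)) k
    have hpow : ((m:ℝ) + 2) ^ k = ((m:ℝ) + 1) ^ k * (1 + 1 / ((m:ℝ) + 1)) ^ k := by
      rw [← mul_pow]; congr 1; field_simp; ring
    have h2 : c + 1 + (m:ℝ) ≤ (1 + 1 / ((m:ℝ) + 1)) ^ k * ((m:ℝ) + 1) := by
      have h3 := mul_le_mul_of_nonneg_right hbern hm1.le
      have hid : (1 + (k:ℝ) * (1 / ((m:ℝ) + 1))) * ((m:ℝ) + 1) = (m:ℝ) + 1 + k := by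
        field_simp
      rw [hid] at h3
      linarith
    have hstep : ((m:ℝ) + 1) ^ k * (c + 1 + m) ≤ ((m:ℝ) + 2) ^ k * ((m:ℝ) + 1) := by
      rw [hpow, mul_assoc]
      exact mul_le_mul_of_nonneg_left h2 (by positivity)
    have hc1m : (0:ℝ) ≤ c + 1 + m := by positivity
    calc (∏ j ∈ Finset.range m, (c + 1 + j)) * (c + 1 + m)
        ≤ ((m : ℝ) + 1) ^ k * m.factorial * (c + 1 + m) :=
          mul_le_mul_of_nonneg_right ih hc1m
      _ = ((m:ℝ) + 1) ^ k * (c + 1 + m) * m.factorial := by ring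
      _ ≤ ((m:ℝ) + 2) ^ k * ((m:ℝ) + 1) * m.factorial :=
          mul_le_mul_of_nonneg_right hstep hfac.le
      _ = (((m + 1 : ℕ) : ℝ) + 1) ^ k * ((m + 1).factorial : ℝ) := by
          push_cast [Nat.factorial_succ]; ring

lemma chain_pow {ε K : ℝ} (hε : 0 ≤ ε) (hK : 1 ≤ K) (hεK : ε * K ≤ 1)
    {g d c : ℕ} (hd : d ≤ g) : ε ^ g * K ^ (g + c) ≤ ε ^ d * K ^ (d + c) := by
  obtain ⟨s, rfl⟩ := Nat.exists_eq_add_of_le hd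
  have h1 : ε ^ (d + s) * K ^ (d + s + c) = (ε ^ d * K ^ (d + c)) * (ε * K) ^ s := by
    rw [show d + s + c = d + c + s by omega, pow_add, pow_add, pow_add, mul_pow]; ring
  rw [h1]
  have h2 : (ε * K) ^ s ≤ 1 := pow_le_one₀ (by positivity) hεK
  have h3 : (0:ℝ) ≤ ε ^ d * K ^ (d + c) := by positivity
  nlinarith

lemma den_bound {q ε : ℝ} (hq : 0 < q) (hε0 : 0 < ε) (hε1 : ε < 1) {G : ℕ} (hG : 1 ≤ G) :
    0 < (G:ℝ) + q * (1 - ε ^ G) ∧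
      (G:ℝ) + q ≤ ((G:ℝ) + q * (1 - ε ^ G)) * (1 + q * ε) := by
  have hεG1 : ε ^ G ≤ 1 := pow_le_one₀ hε0.le hε1.le
  have hεGε : ε ^ G ≤ ε := by
    calc ε ^ G ≤ ε ^ 1 := pow_le_pow_of_le_one hε0.le hε1.le hG
    _ = ε := pow_one ε
  have hG1 : (1:ℝ) ≤ (G:ℝ) := by exact_mod_cast hG
  have hεG0 : 0 ≤ ε ^ G := by positivity
  have hGε : ε ≤ (G:ℝ) * ε := le_mul_of_one_le_left hε0.le hG1
  constructor
  · nlinarith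
  · nlinarith [mul_nonneg hq.le (by linarith : (0:ℝ) ≤ (G:ℝ) * ε - ε ^ G),
      mul_nonneg (mul_nonneg (mul_nonneg hq.le hq.le) hε0.le) (sub_nonneg.mpr hεG1)]

lemma betaFun_nat_pos {a : ℝ} (ha : 0 < a) (m : ℕ) : 0 < betaFun a ((m : ℝ) + 1) := by
  rw [betaFun_nat a ha m]
  have hP : (0:ℝ) < ∏ j ∈ Finset.range (m+1), (a + j) :=
    Finset.prod_pos fun j _ => by positivity
  positivity

lemma incBeta_nonneg {a ε : ℝ} (ha : 0 < a) (hε0 : 0 ≤ ε) (hε1 : ε ≤ 1) (m : ℕ) :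
    0 ≤ incBeta ε a ((m : ℝ) + 1) := by
  unfold incBeta
  apply div_nonneg _ (betaFun_nat_pos ha m).le
  have := integral_nonneg'' (c := a) (m := (m:ℝ)) (Nat.cast_nonneg m) hε0 hε1
  rw [show (m:ℝ) + 1 - 1 = (m:ℝ) by ring]
  exact this

lemma incBeta_div_le {α ε : ℝ} (hα : 0 < α) (hε0 : 0 < ε) (hε1 : ε ≤ 1) (g m : ℕ) :
    incBeta ε ((g:ℝ) + α) ((m:ℝ) + 1) / ε ^ α ≤
      ε ^ g * ((∏ j ∈ Finset.range m, ((g:ℝ) + α + 1 + j)) / m.factorial) := by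
  set c := (g:ℝ) + α with hcdef
  have hc : 0 < c := by positivity
  have hB := betaFun_nat c hc m
  have hP : (0:ℝ) < ∏ j ∈ Finset.range (m+1), (c + j) :=
    Finset.prod_pos fun j _ => by positivity
  have hBpos : 0 < betaFun c ((m:ℝ)+1) := betaFun_nat_pos hc m
  have hεα : (0:ℝ) < ε ^ α := Real.rpow_pos_of_pos hε0 α
  have hInt : (∫ x in (0:ℝ)..ε, x ^ (c - 1) * (1-x) ^ ((m:ℝ)+1-1)) ≤ ε ^ c / c := by
    rw [show (m:ℝ) + 1 - 1 = (m:ℝ) by ring]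
    exact integral_le_rpow hc (Nat.cast_nonneg m) hε0 hε1
  have hPsplit : ∏ j ∈ Finset.range (m+1), (c + j) =
      (∏ j ∈ Finset.range m, (c + 1 + j)) * c := by
    rw [Finset.prod_range_succ']
    simp only [Nat.cast_add, Nat.cast_one, Nat.cast_zero, add_zero]
    congr 1
    exact Finset.prod_congr rfl fun j _ => by ring
  have hsplit : ε ^ c = ε ^ g * ε ^ α := by
    rw [hcdef, Real.rpow_add hε0, Real.rpow_natCast]
  have step1 : incBeta ε c ((m:ℝ)+1) / ε ^ α ≤ (ε ^ c / c) / betaFun c ((m:ℝ)+1) / ε ^ α := by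
    unfold incBeta
    gcongr
  refine step1.trans (le_of_eq ?_)
  rw [hB, hPsplit, hsplit]
  have hfac : (0:ℝ) < m.factorial := by positivity
  field_simp

lemma incBeta_last_le {α ε : ℝ} (hα : 0 < α) (hε0 : 0 < ε) (hε1 : ε ≤ 1) (m : ℕ) :
    incBeta ε α ((m:ℝ) + 1) / ε ^ α ≤ 1 / (α * betaFun α ((m:ℝ) + 1)) := by
  have hBpos : 0 < betaFun α ((m:ℝ)+1) := betaFun_nat_pos hα m
  have hεα : (0:ℝ) < ε ^ α := Real.rpow_pos_of_pos hε0 α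
  have hInt : (∫ x in (0:ℝ)..ε, x ^ (α - 1) * (1-x) ^ ((m:ℝ)+1-1)) ≤ ε ^ α / α := by
    rw [show (m:ℝ) + 1 - 1 = (m:ℝ) by ring]
    exact integral_le_rpow hα (Nat.cast_nonneg m) hε0 hε1
  have step1 : incBeta ε α ((m:ℝ)+1) / ε ^ α ≤ (ε ^ α / α) / betaFun α ((m:ℝ)+1) / ε ^ α := by
    unfold incBeta
    gcongr
  refine step1.trans (le_of_eq ?_)
  field_simp

lemma num_bound_mid {α p ε K : ℝ} (hα : 0 < α) (hp1 : p < 1) (hε0 : 0 < ε) (hε1 : ε < 1)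
    (hK1 : 1 ≤ K) (hεK : ε * K ≤ 1) {r : ℕ} (hr2 : α - r ≤ 1)
    {g m d : ℕ} (hg : d ≤ g) (hmK : (m:ℝ) + 1 ≤ K) :
    p + (1 - p) * incBeta ε ((g:ℝ) + α) ((m:ℝ) + 1) / ε ^ α ≤
      p + (1 - p) * (ε ^ d * K ^ (d + 1 + r)) := by
  have hX := incBeta_div_le hα hε0 hε1.le g m
  have hfac : (0:ℝ) < m.factorial := by positivity
  have h2 : (∏ j ∈ Finset.range m, ((g:ℝ) + α + 1 + j)) / m.factorial ≤
      ((m:ℝ) + 1) ^ (g + (r + 1)) := by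
    rw [div_le_iff₀ hfac]
    exact prod_fact_le (by positivity) (by push_cast; linarith) m
  have h3 : ((m:ℝ) + 1) ^ (g + (r + 1)) ≤ K ^ (g + (r + 1)) :=
    pow_le_pow_left₀ (by positivity) hmK _
  have h4 : ε ^ g * K ^ (g + (r + 1)) ≤ ε ^ d * K ^ (d + (r + 1)) :=
    chain_pow hε0.le hK1 hεK hg
  have hXle : incBeta ε ((g:ℝ) + α) ((m:ℝ) + 1) / ε ^ α ≤ ε ^ d * K ^ (d + 1 + r) := by
    calc incBeta ε ((g:ℝ) + α) ((m:ℝ) + 1) / ε ^ α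
        ≤ ε ^ g * ((∏ j ∈ Finset.range m, ((g:ℝ) + α + 1 + j)) / m.factorial) := hX
      _ ≤ ε ^ g * K ^ (g + (r + 1)) :=
          mul_le_mul_of_nonneg_left (h2.trans h3) (by positivity)
      _ ≤ ε ^ d * K ^ (d + (r + 1)) := h4
      _ = ε ^ d * K ^ (d + 1 + r) := by rw [show d + (r + 1) = d + 1 + r by omega]
  rw [mul_div_assoc]
  have h1p : (0:ℝ) ≤ 1 - p := by linarith
  nlinarith [mul_le_mul_of_nonneg_left hXle h1p]

set_option maxHeartbeats 2000000 in
lemma main_ineq (α p : ℝ) (hα : 0 < α) (hp0 : 0 < p) (hp1 : p < 1)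
    (r : ℕ) (hr1 : 0 < α - r) (hr2 : α - r ≤ 1)
    (n : ℕ) (hn : 1 ≤ n) (ε : ℝ) (hε0 : 0 < ε) (hε1 : ε < 1)
    (hεn : ε * (1 + n / (α - r)) < 1)
    (t : ℕ) (ht1 : 1 ≤ t) (htn : t ≤ n) (ns : Fin t → ℕ)
    (hns1 : ∀ j, 1 ≤ ns j) (hnsn : ∀ j, ns j ≤ n) :
    eppfEps α p ε n t ns ≤
      (1 + α * (1 - p) * ε) ^ n *
        (1 + (1 - p) / p * ε ^ 2 * (1 + n / (α - r)) ^ (3 + r)) ^ n *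
        (1 + (1 - p) / p * ε * (1 + n / (α - r)) ^ (2 + r)) *
        eppfZero α p n t ns := by
  have h1p : (0:ℝ) < 1 - p := by linarith
  have hK1 : (1:ℝ) ≤ 1 + (n:ℝ) / (α - r) := by
    have : (0:ℝ) ≤ (n:ℝ) / (α - r) := by positivity
    linarith
  have hKn : (n:ℝ) + 1 ≤ 1 + (n:ℝ) / (α - r) := by
    have hh : (n:ℝ) ≤ (n:ℝ) / (α - r) := by
      rw [le_div_iff₀ hr1]
      nlinarith [Nat.cast_nonneg (α := ℝ) n]
    linarith
  set K : ℝ := 1 + n / (α - r) with hKdef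
  have hεK : ε * K ≤ 1 := hεn.le
  have hq0 : (0:ℝ) < α * (1 - p) := by positivity
  set q : ℝ := α * (1 - p) with hqdef
  have hF1 : (1:ℝ) ≤ 1 + (1 - p) / p * ε * K ^ (2 + r) := by
    have : (0:ℝ) ≤ (1 - p) / p * ε * K ^ (2 + r) :=
      mul_nonneg (mul_nonneg (div_nonneg h1p.le hp0.le) hε0.le)
        (pow_nonneg (by linarith) _)
    linarith
  have hF2 : (1:ℝ) ≤ 1 + (1 - p) / p * ε ^ 2 * K ^ (3 + r) := by
    have : (0:ℝ) ≤ (1 - p) / p * ε ^ 2 * K ^ (3 + r) :=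
      mul_nonneg (mul_nonneg (div_nonneg h1p.le hp0.le) (by positivity))
        (pow_nonneg (by linarith) _)
    linarith
  set F1 : ℝ := 1 + (1 - p) / p * ε * K ^ (2 + r) with hF1def
  set F2 : ℝ := 1 + (1 - p) / p * ε ^ 2 * K ^ (3 + r) with hF2def
  have hqε1 : (1:ℝ) ≤ 1 + q * ε := by nlinarith
  set h : Fin t → ℝ := fun j => if j.val = t - 2 then F1 else F2 with hhdef
  have hh1 : ∀ j, (1:ℝ) ≤ h j := by
    intro j; simp only [hhdef]; split
    · exact hF1
    · exact hF2
  have hh0 : ∀ j, (0:ℝ) ≤ h j := fun j => le_trans zero_le_one (hh1 j)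
  -- per-sigma bound
  have key : ∀ σ : Equiv.Perm (Fin t),
      (∏ j, (p + (1 - p) *
          incBeta ε (((∑ l ∈ Finset.Ioi j, ns (σ l) : ℕ) : ℝ) + α) ((ns (σ j) : ℝ) + 1)
          / ε ^ α) /
        (((∑ l ∈ Finset.Ici j, ns (σ l) : ℕ) : ℝ) +
          q * (1 - ε ^ (∑ l ∈ Finset.Ici j, ns (σ l))))) ≤
      ((1 + q * ε) ^ n * F2 ^ n * F1) *
        ∏ j : Fin t, (p + (if j.val = t - 1 then
            (1 - p) / (α * betaFun α ((ns (σ j) : ℝ) + 1)) else 0)) /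
          (((∑ l ∈ Finset.Ici j, ns (σ l) : ℕ) : ℝ) + q) := by
    intro σ
    have term : ∀ j : Fin t,
        (0 ≤ (p + (1 - p) *
          incBeta ε (((∑ l ∈ Finset.Ioi j, ns (σ l) : ℕ) : ℝ) + α) ((ns (σ j) : ℝ) + 1)
          / ε ^ α) /
        (((∑ l ∈ Finset.Ici j, ns (σ l) : ℕ) : ℝ) +
          q * (1 - ε ^ (∑ l ∈ Finset.Ici j, ns (σ l))))) ∧
        (0 ≤ (p + (if j.val = t - 1 then
            (1 - p) / (α * betaFun α ((ns (σ j) : ℝ) + 1)) else 0)) /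
          (((∑ l ∈ Finset.Ici j, ns (σ l) : ℕ) : ℝ) + q)) ∧
        (p + (1 - p) *
          incBeta ε (((∑ l ∈ Finset.Ioi j, ns (σ l) : ℕ) : ℝ) + α) ((ns (σ j) : ℝ) + 1)
          / ε ^ α) /
        (((∑ l ∈ Finset.Ici j, ns (σ l) : ℕ) : ℝ) +
          q * (1 - ε ^ (∑ l ∈ Finset.Ici j, ns (σ l)))) ≤
        ((1 + q * ε) * h j) *
          ((p + (if j.val = t - 1 then
            (1 - p) / (α * betaFun α ((ns (σ j) : ℝ) + 1)) else 0)) /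
          (((∑ l ∈ Finset.Ici j, ns (σ l) : ℕ) : ℝ) + q)) := by
      intro j
      set G : ℕ := ∑ l ∈ Finset.Ici j, ns (σ l) with hGdef
      set g' : ℕ := ∑ l ∈ Finset.Ioi j, ns (σ l) with hg'def
      set m : ℕ := ns (σ j) with hmdef
      have hG1 : 1 ≤ G := by
        calc 1 ≤ ns (σ j) := hns1 _
        _ ≤ G := Finset.single_le_sum (f := fun l => ns (σ l))
            (fun i _ => Nat.zero_le _) (Finset.mem_Ici.mpr le_rfl)
      obtain ⟨hDpos, hDle⟩ := den_bound hq0 hε0 hε1 hG1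
      have hD0pos : (0:ℝ) < (G:ℝ) + q := by
        have : (1:ℝ) ≤ (G:ℝ) := by exact_mod_cast hG1
        linarith
      have hmK : (m:ℝ) + 1 ≤ K := by
        have : (m:ℝ) ≤ (n:ℝ) := by exact_mod_cast hnsn (σ j)
        linarith
      have hBpos : 0 < betaFun α ((m:ℝ) + 1) := betaFun_nat_pos hα m
      have hg'α : (0:ℝ) < (g':ℝ) + α := by positivity
      have hIB0 : 0 ≤ incBeta ε ((g':ℝ) + α) ((m:ℝ) + 1) :=
        incBeta_nonneg hg'α hε0.le hε1.le m
      have hεα : (0:ℝ) < ε ^ α := Real.rpow_pos_of_pos hε0 α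
      have hNε0 : 0 ≤ p + (1 - p) * incBeta ε ((g':ℝ) + α) ((m:ℝ) + 1) / ε ^ α := by
        have : 0 ≤ (1 - p) * incBeta ε ((g':ℝ) + α) ((m:ℝ) + 1) / ε ^ α :=
          div_nonneg (mul_nonneg h1p.le hIB0) hεα.le
        linarith
      have hN00 : 0 ≤ p + (if j.val = t - 1 then
          (1 - p) / (α * betaFun α ((m:ℝ) + 1)) else 0) := by
        have : 0 ≤ (if j.val = t - 1 then
            (1 - p) / (α * betaFun α ((m:ℝ) + 1)) else 0) := by
          split
          · positivity
          · exact le_refl 0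
        linarith
      -- numerator bound
      have hNum : p + (1 - p) * incBeta ε ((g':ℝ) + α) ((m:ℝ) + 1) / ε ^ α ≤
          h j * (p + (if j.val = t - 1 then
            (1 - p) / (α * betaFun α ((m:ℝ) + 1)) else 0)) := by
        by_cases hjt : j.val = t - 1
        · have hIoi : Finset.Ioi j = ∅ := by
            refine Finset.eq_empty_of_forall_notMem fun l hl => ?_
            rw [Finset.mem_Ioi, Fin.lt_def] at hl
            have := l.isLt
            omega
          have hg'0 : g' = 0 := by rw [hg'def, hIoi, Finset.sum_empty]
          have hle : incBeta ε ((g':ℝ) + α) ((m:ℝ) + 1) / ε ^ α ≤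
              1 / (α * betaFun α ((m:ℝ) + 1)) := by
            rw [hg'0, Nat.cast_zero, zero_add]
            exact incBeta_last_le hα hε0 hε1.le m
          rw [if_pos hjt]
          have step : p + (1 - p) * incBeta ε ((g':ℝ) + α) ((m:ℝ) + 1) / ε ^ α ≤
              p + (1 - p) / (α * betaFun α ((m:ℝ) + 1)) := by
            rw [mul_div_assoc]
            have h5 := mul_le_mul_of_nonneg_left hle h1p.le
            rw [mul_one_div] at h5
            linarith
          refine step.trans ?_
          have h6 : 0 ≤ p + (1 - p) / (α * betaFun α ((m:ℝ) + 1)) := by positivity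
          exact le_mul_of_one_le_left h6 (hh1 j)
        · rw [if_neg hjt, add_zero]
          have hjlt : j.val + 1 < t := by have := j.isLt; omega
          have hg'1 : 1 ≤ g' := by
            have hmem : (⟨j.val + 1, hjlt⟩ : Fin t) ∈ Finset.Ioi j := by
              rw [Finset.mem_Ioi, Fin.lt_def]; simp
            calc 1 ≤ ns (σ ⟨j.val + 1, hjlt⟩) := hns1 _
            _ ≤ g' := Finset.single_le_sum (f := fun l => ns (σ l))
                (fun i _ => Nat.zero_le _) hmem
          by_cases hjt2 : j.val = t - 2
          · have hb := num_bound_mid (p := p) hα hp1 hε0 hε1 hK1 hεK hr2 hg'1 hmK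
            simp only [hhdef]
            rw [if_pos hjt2]
            rw [pow_one, show 1 + 1 + r = 2 + r by omega] at hb
            refine hb.trans (le_of_eq ?_)
            rw [hF1def]
            field_simp
          · have hjlt2 : j.val + 2 < t := by have := j.isLt; omega
            have hg'2 : 2 ≤ g' := by
              have hmem1 : (⟨j.val + 1, hjlt⟩ : Fin t) ∈ Finset.Ioi j := by
                rw [Finset.mem_Ioi, Fin.lt_def]; simp
              have hmem2 : (⟨j.val + 2, hjlt2⟩ : Fin t) ∈ Finset.Ioi j := by
                rw [Finset.mem_Ioi, Fin.lt_def]; simp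
              have hne : (⟨j.val + 1, hjlt⟩ : Fin t) ≠ ⟨j.val + 2, hjlt2⟩ := by
                simp [Fin.ext_iff]
              have hsub : ({(⟨j.val + 1, hjlt⟩ : Fin t), ⟨j.val + 2, hjlt2⟩} :
                  Finset (Fin t)) ⊆ Finset.Ioi j := by
                intro l hl
                rcases Finset.mem_insert.mp hl with h | h
                · rw [h]; exact hmem1
                · rw [Finset.mem_singleton.mp h]; exact hmem2
              calc 2 ≤ ns (σ ⟨j.val + 1, hjlt⟩) + ns (σ ⟨j.val + 2, hjlt2⟩) := by
                    have := hns1 (σ ⟨j.val + 1, hjlt⟩)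
                    have := hns1 (σ ⟨j.val + 2, hjlt2⟩)
                    omega
                _ = ∑ l ∈ ({(⟨j.val + 1, hjlt⟩ : Fin t), ⟨j.val + 2, hjlt2⟩} :
                      Finset (Fin t)), ns (σ l) := (Finset.sum_pair (f := fun l => ns (σ l)) hne).symm
                _ ≤ g' := Finset.sum_le_sum_of_subset hsub
            have hb := num_bound_mid (p := p) hα hp1 hε0 hε1 hK1 hεK hr2 hg'2 hmK
            simp only [hhdef]
            rw [if_neg hjt2]
            rw [show 2 + 1 + r = 3 + r by omega] at hb
            refine hb.trans (le_of_eq ?_)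
            rw [hF2def]
            field_simp
      -- assemble
      refine ⟨div_nonneg hNε0 hDpos.le, div_nonneg hN00 hD0pos.le, ?_⟩
      have hhN0 : 0 ≤ h j * (p + (if j.val = t - 1 then
          (1 - p) / (α * betaFun α ((m:ℝ) + 1)) else 0)) := mul_nonneg (hh0 j) hN00
      have hinv : 1 / ((G:ℝ) + q * (1 - ε ^ G)) ≤ (1 + q * ε) / ((G:ℝ) + q) := by
        rw [div_le_div_iff₀ hDpos hD0pos]
        nlinarith [hDle]
      calc (p + (1 - p) * incBeta ε ((g':ℝ) + α) ((m:ℝ) + 1) / ε ^ α) /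
            ((G:ℝ) + q * (1 - ε ^ G))
          ≤ (h j * (p + (if j.val = t - 1 then
              (1 - p) / (α * betaFun α ((m:ℝ) + 1)) else 0))) /
            ((G:ℝ) + q * (1 - ε ^ G)) := by gcongr
        _ = (h j * (p + (if j.val = t - 1 then
              (1 - p) / (α * betaFun α ((m:ℝ) + 1)) else 0))) *
            (1 / ((G:ℝ) + q * (1 - ε ^ G))) := by rw [mul_one_div]
        _ ≤ (h j * (p + (if j.val = t - 1 then
              (1 - p) / (α * betaFun α ((m:ℝ) + 1)) else 0))) *
            ((1 + q * ε) / ((G:ℝ) + q)) := mul_le_mul_of_nonneg_left hinv hhN0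
        _ = ((1 + q * ε) * h j) *
            ((p + (if j.val = t - 1 then
              (1 - p) / (α * betaFun α ((m:ℝ) + 1)) else 0)) / ((G:ℝ) + q)) := by
            ring
    -- product assembly
    have hprodh : ∏ j, h j = F1 * F2 ^ (t - 1) := by
      have hj0 : t - 2 < t := by omega
      rw [← Finset.mul_prod_erase Finset.univ h (Finset.mem_univ (⟨t - 2, hj0⟩ : Fin t))]
      have e1 : h (⟨t - 2, hj0⟩ : Fin t) = F1 := by simp [hhdef]
      have e2 : ∏ j ∈ Finset.univ.erase (⟨t - 2, hj0⟩ : Fin t), h j = F2 ^ (t - 1) := by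
        rw [Finset.prod_congr rfl (g := fun _ => F2) (fun j hj => ?_), Finset.prod_const,
          Finset.card_erase_of_mem (Finset.mem_univ _), Finset.card_univ, Fintype.card_fin]
        have hjne := Finset.ne_of_mem_erase hj
        simp only [hhdef]
        rw [if_neg (fun hc => hjne (Fin.ext (by simpa using hc)))]
      rw [e1, e2]
    have hPB : 0 ≤ ∏ j : Fin t, (p + (if j.val = t - 1 then
        (1 - p) / (α * betaFun α ((ns (σ j) : ℝ) + 1)) else 0)) /
        (((∑ l ∈ Finset.Ici j, ns (σ l) : ℕ) : ℝ) + q) :=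
      Finset.prod_nonneg fun j _ => (term j).2.1
    calc (∏ j, (p + (1 - p) *
          incBeta ε (((∑ l ∈ Finset.Ioi j, ns (σ l) : ℕ) : ℝ) + α) ((ns (σ j) : ℝ) + 1)
          / ε ^ α) /
        (((∑ l ∈ Finset.Ici j, ns (σ l) : ℕ) : ℝ) +
          q * (1 - ε ^ (∑ l ∈ Finset.Ici j, ns (σ l)))))
        ≤ ∏ j : Fin t, ((1 + q * ε) * h j) *
          ((p + (if j.val = t - 1 then
            (1 - p) / (α * betaFun α ((ns (σ j) : ℝ) + 1)) else 0)) /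
          (((∑ l ∈ Finset.Ici j, ns (σ l) : ℕ) : ℝ) + q)) :=
          Finset.prod_le_prod (fun j _ => (term j).1) (fun j _ => (term j).2.2)
      _ = (1 + q * ε) ^ t * (∏ j, h j) *
          ∏ j : Fin t, (p + (if j.val = t - 1 then
            (1 - p) / (α * betaFun α ((ns (σ j) : ℝ) + 1)) else 0)) /
          (((∑ l ∈ Finset.Ici j, ns (σ l) : ℕ) : ℝ) + q) := by
          rw [Finset.prod_mul_distrib, Finset.prod_mul_distrib, Finset.prod_const,
            Finset.card_univ, Fintype.card_fin]
      _ ≤ ((1 + q * ε) ^ n * F2 ^ n * F1) *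
          ∏ j : Fin t, (p + (if j.val = t - 1 then
            (1 - p) / (α * betaFun α ((ns (σ j) : ℝ) + 1)) else 0)) /
          (((∑ l ∈ Finset.Ici j, ns (σ l) : ℕ) : ℝ) + q) := by
          apply mul_le_mul_of_nonneg_right _ hPB
          rw [hprodh]
          have e3 : (1 + q * ε) ^ t ≤ (1 + q * ε) ^ n := pow_le_pow_right₀ hqε1 htn
          have e4 : F2 ^ (t - 1) ≤ F2 ^ n := pow_le_pow_right₀ hF2 (by omega)
          calc (1 + q * ε) ^ t * (F1 * F2 ^ (t - 1))
              ≤ (1 + q * ε) ^ n * (F1 * F2 ^ n) := by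
                apply mul_le_mul e3 _ _ (by positivity)
                · exact mul_le_mul_of_nonneg_left e4 (by linarith)
                · exact mul_nonneg (by linarith) (pow_nonneg (by linarith) _)
            _ = (1 + q * ε) ^ n * F2 ^ n * F1 := by ring
  -- sum assembly
  unfold eppfEps eppfZero
  rw [← hqdef]
  have hsum : (∑ σ : Equiv.Perm (Fin t), ∏ j,
      (p + (1 - p) *
          incBeta ε (((∑ l ∈ Finset.Ioi j, ns (σ l) : ℕ) : ℝ) + α) ((ns (σ j) : ℝ) + 1)
          / ε ^ α) /
      (((∑ l ∈ Finset.Ici j, ns (σ l) : ℕ) : ℝ) +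
        q * (1 - ε ^ (∑ l ∈ Finset.Ici j, ns (σ l))))) ≤
      ((1 + q * ε) ^ n * F2 ^ n * F1) *
      ∑ σ : Equiv.Perm (Fin t), ∏ j : Fin t,
      (p + (if j.val = t - 1 then
              (1 - p) / (α * betaFun α ((ns (σ j) : ℝ) + 1)) else 0)) /
      (((∑ l ∈ Finset.Ici j, ns (σ l) : ℕ) : ℝ) + q) := by
    rw [Finset.mul_sum]
    exact Finset.sum_le_sum fun σ _ => key σ
  have hX0 : (0:ℝ) ≤ α ^ t * Real.Gamma α / Real.Gamma ((n:ℝ) + α) *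
      ∏ j, (Nat.factorial (ns j) : ℝ) := by
    have h1 : 0 < Real.Gamma α := Real.Gamma_pos_of_pos hα
    have h2 : 0 < Real.Gamma ((n:ℝ) + α) := Real.Gamma_pos_of_pos (by positivity)
    positivity
  calc α ^ t * Real.Gamma α / Real.Gamma ((n:ℝ) + α) *
      (∏ j, (Nat.factorial (ns j) : ℝ)) *
      (∑ σ : Equiv.Perm (Fin t), ∏ j,
      (p + (1 - p) *
          incBeta ε (((∑ l ∈ Finset.Ioi j, ns (σ l) : ℕ) : ℝ) + α) ((ns (σ j) : ℝ) + 1)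
          / ε ^ α) /
      (((∑ l ∈ Finset.Ici j, ns (σ l) : ℕ) : ℝ) +
        q * (1 - ε ^ (∑ l ∈ Finset.Ici j, ns (σ l)))))
      ≤ α ^ t * Real.Gamma α / Real.Gamma ((n:ℝ) + α) *
      (∏ j, (Nat.factorial (ns j) : ℝ)) *
      (((1 + q * ε) ^ n * F2 ^ n * F1) *
      ∑ σ : Equiv.Perm (Fin t), ∏ j : Fin t,
      (p + (if j.val = t - 1 then
              (1 - p) / (α * betaFun α ((ns (σ j) : ℝ) + 1)) else 0)) /
      (((∑ l ∈ Finset.Ici j, ns (σ l) : ℕ) : ℝ) + q)) :=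
        mul_le_mul_of_nonneg_left hsum hX0
    _ = (1 + q * ε) ^ n * F2 ^ n * F1 *
      (α ^ t * Real.Gamma α / Real.Gamma ((n:ℝ) + α) *
      (∏ j, (Nat.factorial (ns j) : ℝ)) *
      ∑ σ : Equiv.Perm (Fin t), ∏ j : Fin t,
      (p + (if j.val = t - 1 then
              (1 - p) / (α * betaFun α ((ns (σ j) : ℝ) + 1)) else 0)) /
      (((∑ l ∈ Finset.Ici j, ns (σ l) : ℕ) : ℝ) + q)) := by ring

lemma blockEnum_mem {n : ℕ} (P : SetPartition n) (j : Fin P.1.card) :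
    blockEnum P.1 j ∈ P.1 :=
  ((Fintype.equivFinOfCardEq (Fintype.card_coe P.1)).symm j).2

lemma blockSize_pos {n : ℕ} (P : SetPartition n) (j : Fin P.1.card) :
    1 ≤ blockSize P j := by
  rw [blockSize, Nat.one_le_iff_ne_zero, ← Nat.pos_iff_ne_zero, Finset.card_pos]
  rw [Finset.nonempty_iff_ne_empty]
  intro hc
  exact P.2.1 (hc ▸ blockEnum_mem P j)

lemma blockSize_le {n : ℕ} (P : SetPartition n) (j : Fin P.1.card) :
    blockSize P j ≤ n := by
  rw [blockSize]
  calc (blockEnum P.1 j).card ≤ Finset.univ.card := Finset.card_le_univ _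
  _ = n := by simp

lemma card_pos' {n : ℕ} (hn : 1 ≤ n) (P : SetPartition n) : 1 ≤ P.1.card := by
  rw [Nat.one_le_iff_ne_zero, ← Nat.pos_iff_ne_zero, Finset.card_pos]
  obtain ⟨A, ⟨hA, _⟩, _⟩ := P.2.2 ⟨0, hn⟩
  exact ⟨A, hA⟩

lemma card_le' {n : ℕ} (hn : 1 ≤ n) (P : SetPartition n) : P.1.card ≤ n := by
  have i0 : Fin n := ⟨0, hn⟩
  have hne : ∀ A ∈ P.1, A.Nonempty := fun A hA =>
    Finset.nonempty_iff_ne_empty.mpr fun hc => P.2.1 (hc ▸ hA)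
  classical
  set f : Finset (Fin n) → Fin n :=
    fun A => if h : A.Nonempty then h.choose else i0 with hf
  have hfmem : ∀ A ∈ P.1, f A ∈ A := by
    intro A hA
    rw [hf]
    dsimp only
    rw [dif_pos (hne A hA)]
    exact (hne A hA).choose_spec
  have hinj : Set.InjOn f P.1 := by
    intro A hA B hB hfAB
    obtain ⟨U, _, hU⟩ := P.2.2 (f A)
    have h1 := hU A ⟨hA, hfmem A hA⟩
    have h2 := hU B ⟨hB, hfAB ▸ hfmem B hB⟩
    rw [h1, h2]
  calc P.1.card ≤ (Finset.univ : Finset (Fin n)).card :=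
    Finset.card_le_card_of_injOn f (fun A _ => Finset.mem_univ _) hinj
  _ = n := by simp


/-- Upper ratio bound between the quasi-Bernoulli partition distributions: with `r` the
nonnegative integer such that `0 < α - r ≤ 1`, if `ε (1 + n/(α-r)) < 1` then for every set
partition `𝒜` of `{1,…,n}`,
`Pr_{ε,n}(𝒜) ≤ (1+α(1-p)ε)^n (1 + ((1-p)/p) ε² (1+n/(α-r))^{3+r})^n
  (1 + ((1-p)/p) ε (1+n/(α-r))^{2+r}) Pr_{0,n}(𝒜)`. -/
theorem stmt19 (α p : ℝ) (hα : 0 < α) (hp : p ∈ Set.Ioo (0:ℝ) 1)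
    (r : ℕ) (hr1 : 0 < α - r) (hr2 : α - r ≤ 1)
    (n : ℕ) (hn : 1 ≤ n) (ε : ℝ) (hε : ε ∈ Set.Ioo (0:ℝ) 1)
    (hεn : ε * (1 + n / (α - r)) < 1) (P : SetPartition n) :
    PrEps α p ε n P ≤
      (1 + α * (1 - p) * ε) ^ n *
        (1 + (1 - p) / p * ε ^ 2 * (1 + n / (α - r)) ^ (3 + r)) ^ n *
        (1 + (1 - p) / p * ε * (1 + n / (α - r)) ^ (2 + r)) *
        PrZero α p n P := by
  obtain ⟨hp0, hp1⟩ := hp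
  obtain ⟨hε0, hε1⟩ := hε
  unfold PrEps PrZero
  exact main_ineq α p hα hp0 hp1 r hr1 hr2 n hn ε hε0 hε1 hεn P.1.card
    (card_pos' hn P) (card_le' hn P) (blockSize P) (blockSize_pos P) (blockSize_le P)
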